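/- (Proposition 1) Let A ⊆ ℝⁿ be a bounded closed set with 0 ∈ A ⊆ B₁ and Ω := ℝⁿ \ A. Let u be continuous on the closure of Ω and infinity harmonic in Ω with limsup_{x→∞} |u(x)|/|x| < +∞. Then lim_{r→∞} Lip(u, B_r^c) = S_∞, where B_r^c := ℝⁿ \ B_r. -/

import Mathlib

open Metric Set Filter Bornology Topology
open scoped RealInnerProductSpace

noncomputable section

/-- Euclidean space ℝⁿ. -/
abbrev Euc (n : ℕ) := EuclideanSpace ℝ (Fin n)

/-- Comparison with cones from above (infinity subharmonic). -/
def CmpAbove {n : ℕ} (Ω : Set (Euc n)) (u : Euc n → ℝ) : Prop :=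
  ∀ V : Set (Euc n), IsOpen V → IsBounded V → closure V ⊆ Ω →
    ∀ (x₀ : Euc n) (a b : ℝ),
      (∀ x ∈ frontier (V \ {x₀}), u x ≤ a * ‖x - x₀‖ + b) →
      ∀ x ∈ V, u x ≤ a * ‖x - x₀‖ + b

/-- Comparison with cones from below (infinity superharmonic). -/
def CmpBelow {n : ℕ} (Ω : Set (Euc n)) (u : Euc n → ℝ) : Prop :=
  ∀ V : Set (Euc n), IsOpen V → IsBounded V → closure V ⊆ Ω →
    ∀ (x₀ : Euc n) (a b : ℝ),
      (∀ x ∈ frontier (V \ {x₀}), a * ‖x - x₀‖ + b ≤ u x) →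
      ∀ x ∈ V, a * ‖x - x₀‖ + b ≤ u x

/-- Infinity harmonic = comparison with cones from both sides. -/
def InfHarmonic {n : ℕ} (Ω : Set (Euc n)) (u : Euc n → ℝ) : Prop :=
  CmpAbove Ω u ∧ CmpBelow Ω u

/-- m⁺ = max of u on ∂Ω. -/
def mP {n : ℕ} (Ω : Set (Euc n)) (u : Euc n → ℝ) : ℝ := sSup (u '' frontier Ω)

/-- m⁻ = min of u on ∂Ω. -/
def mM {n : ℕ} (Ω : Set (Euc n)) (u : Euc n → ℝ) : ℝ := sInf (u '' frontier Ω)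

/-- S⁺_r := (max(max_{∂B_r} u, m⁺) − m⁺)/r. -/
def SP {n : ℕ} (Ω : Set (Euc n)) (u : Euc n → ℝ) (r : ℝ) : ℝ :=
  (max (sSup (u '' sphere (0 : Euc n) r)) (mP Ω u) - mP Ω u) / r

/-- S⁻_r := (m⁻ − min(min_{∂B_r} u, m⁻))/r. -/
def SM {n : ℕ} (Ω : Set (Euc n)) (u : Euc n → ℝ) (r : ℝ) : ℝ :=
  (mM Ω u - min (sInf (u '' sphere (0 : Euc n) r)) (mM Ω u)) / r

/-- Lip(u, S) := sup_{x≠y ∈ S} |u(x) − u(y)|/|x − y|. -/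
def lipOn {n : ℕ} (u : Euc n → ℝ) (S : Set (Euc n)) : ℝ :=
  sSup ((fun p : Euc n × Euc n => |u p.1 - u p.2| / ‖p.1 - p.2‖) ''
    {p : Euc n × Euc n | p.1 ∈ S ∧ p.2 ∈ S ∧ p.1 ≠ p.2})

/- ===================== auxiliary development ===================== -/

section Dual

variable {n : ℕ}

private lemma sSup_neg_set (s : Set ℝ) : sSup (-s) = -sInf s := by
  rw [Real.sInf_def, neg_neg]

private lemma sInf_neg_set (s : Set ℝ) : sInf (-s) = -sSup s := by
  rw [Real.sInf_def, neg_neg]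

private lemma negfun_image (u : Euc n → ℝ) (s : Set (Euc n)) :
    (fun x => -u x) '' s = -(u '' s) := by
  rw [← Set.image_image (fun t : ℝ => -t) u s, Set.image_neg_eq_neg]

private lemma cmpAbove_neg {Ω : Set (Euc n)} {u : Euc n → ℝ} (h : CmpBelow Ω u) :
    CmpAbove Ω (fun x => -u x) := by
  intro V hVo hVb hVc x₀ a b hbd x hx
  have h2 := h V hVo hVb hVc x₀ (-a) (-b)
    (fun z hz => by have h3 : -u z ≤ a * ‖z - x₀‖ + b := hbd z hz; linarith) x hx
  show -u x ≤ a * ‖x - x₀‖ + b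
  linarith

private lemma cmpBelow_neg {Ω : Set (Euc n)} {u : Euc n → ℝ} (h : CmpAbove Ω u) :
    CmpBelow Ω (fun x => -u x) := by
  intro V hVo hVb hVc x₀ a b hbd x hx
  have h2 := h V hVo hVb hVc x₀ (-a) (-b)
    (fun z hz => by have h3 : a * ‖z - x₀‖ + b ≤ -u z := hbd z hz; linarith) x hx
  show a * ‖x - x₀‖ + b ≤ -u x
  linarith

private lemma infHarmonic_neg {Ω : Set (Euc n)} {u : Euc n → ℝ} (h : InfHarmonic Ω u) :
    InfHarmonic Ω (fun x => -u x) :=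
  ⟨cmpAbove_neg h.2, cmpBelow_neg h.1⟩

private lemma mP_neg (Ω : Set (Euc n)) (u : Euc n → ℝ) :
    mP Ω (fun x => -u x) = -(mM Ω u) := by
  rw [mP, mM, negfun_image, sSup_neg_set]

private lemma mM_neg (Ω : Set (Euc n)) (u : Euc n → ℝ) :
    mM Ω (fun x => -u x) = -(mP Ω u) := by
  rw [mP, mM, negfun_image, sInf_neg_set]

private lemma SP_neg (Ω : Set (Euc n)) (u : Euc n → ℝ) (r : ℝ) :
    SP Ω (fun x => -u x) r = SM Ω u r := by
  rw [SP, SM, mP_neg, negfun_image, sSup_neg_set]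
  rw [show max (-sInf (u '' sphere (0:Euc n) r)) (-mM Ω u)
      = -(min (sInf (u '' sphere (0:Euc n) r)) (mM Ω u)) from max_neg_neg _ _]
  ring_nf

private lemma SM_neg (Ω : Set (Euc n)) (u : Euc n → ℝ) (r : ℝ) :
    SM Ω (fun x => -u x) r = SP Ω u r := by
  rw [SP, SM, mM_neg, negfun_image, sInf_neg_set]
  rw [show min (-sSup (u '' sphere (0:Euc n) r)) (-mP Ω u)
      = -(max (sSup (u '' sphere (0:Euc n) r)) (mP Ω u)) from min_neg_neg _ _]
  ring_nf

private lemma lipOn_neg (u : Euc n → ℝ) (S : Set (Euc n)) :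
    lipOn (fun x => -u x) S = lipOn u S := by
  unfold lipOn
  congr 1
  apply Set.image_congr
  intro p _
  congr 1
  rw [show -u p.1 - -u p.2 = -(u p.1 - u p.2) by ring, abs_neg]

end Dual


section Main

variable {n : ℕ} {A : Set (Euc n)}

private lemma sphere_sub (hA1 : A ⊆ ball 0 1) {r : ℝ} (hr : 1 ≤ r) :
    sphere (0 : Euc n) r ⊆ closure Aᶜ := by
  intro x hx
  apply subset_closure
  intro hxA
  have h1 := hA1 hxA
  rw [mem_ball, dist_zero_right] at h1
  rw [mem_sphere_zero_iff_norm] at hx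
  linarith

private lemma bddAbove_sphere (hA1 : A ⊆ ball 0 1) {u : Euc n → ℝ}
    (hu : ContinuousOn u (closure Aᶜ)) {r : ℝ} (hr : 1 ≤ r) :
    BddAbove (u '' sphere (0 : Euc n) r) :=
  ((isCompact_sphere (0 : Euc n) r).image_of_continuousOn
    (hu.mono (sphere_sub hA1 hr))).bddAbove

private lemma mp_SP (u : Euc n → ℝ) {r : ℝ} (hr : r ≠ 0) :
    mP Aᶜ u + SP Aᶜ u r * r = max (sSup (u '' sphere (0 : Euc n) r)) (mP Aᶜ u) := by
  rw [SP, div_mul_cancel₀ _ hr]; ring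

private lemma SP_nonneg (u : Euc n → ℝ) {r : ℝ} (hr : 0 < r) : 0 ≤ SP Aᶜ u r :=
  div_nonneg (sub_nonneg.2 (le_max_right _ _)) hr.le

private lemma Sp_nonneg (u : Euc n → ℝ) {Sp : ℝ}
    (hSp : Tendsto (SP Aᶜ u) atTop (𝓝 Sp)) : 0 ≤ Sp :=
  ge_of_tendsto hSp ((eventually_gt_atTop 0).mono fun r hr => SP_nonneg u hr)

private lemma frontier_bdd (hAcl : IsClosed A) (hAbd : IsBounded A)
    {u : Euc n → ℝ} (hu : ContinuousOn u (closure Aᶜ)) :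
    BddAbove (u '' frontier Aᶜ) := by
  have hcomp : IsCompact (frontier Aᶜ) := by
    rw [frontier_compl]
    exact Metric.isCompact_of_isClosed_isBounded isClosed_frontier
      (hAbd.subset hAcl.frontier_subset)
  exact (hcomp.image_of_continuousOn (hu.mono frontier_subset_closure)).bddAbove

private lemma collar (hAcl : IsClosed A) (hAbd : IsBounded A) (h0A : (0 : Euc n) ∈ A)
    (hA1 : A ⊆ ball 0 1) {u : Euc n → ℝ} (hu : ContinuousOn u (closure Aᶜ))
    {δ' : ℝ} (hδ' : 0 < δ') :
    ∃ δ₀, 0 < δ₀ ∧ ∀ w, w ∈ closure Aᶜ → infDist w A ≤ δ₀ → u w ≤ mP Aᶜ u + δ' := by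
  by_contra hcon
  push_neg at hcon
  have h : ∀ k : ℕ, ∃ w, w ∈ closure Aᶜ ∧ infDist w A ≤ 1/(k+1) ∧ mP Aᶜ u + δ' < u w := by
    intro k
    obtain ⟨w, hw1, hw2, hw3⟩ := hcon (1/(k+1)) (by positivity)
    exact ⟨w, hw1, hw2, hw3⟩
  choose w hw1 hw2 hw3 using h
  have hK : IsCompact (closure Aᶜ ∩ closedBall (0 : Euc n) 3) :=
    (isCompact_closedBall (0 : Euc n) 3).inter_left isClosed_closure
  have hwK : ∀ k, w k ∈ closure Aᶜ ∩ closedBall (0 : Euc n) 3 := by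
    intro k
    refine ⟨hw1 k, ?_⟩
    have h2 : infDist (w k) A < 2 := by
      have : (1:ℝ)/(k+1) ≤ 1 := by
        rw [div_le_one (by positivity)]; norm_num
      linarith [hw2 k]
    obtain ⟨a, haA, hda⟩ := (Metric.infDist_lt_iff ⟨0, h0A⟩).1 h2
    have h3 : dist a 0 < 1 := by have := hA1 haA; rwa [mem_ball] at this
    rw [mem_closedBall]
    calc dist (w k) 0 ≤ dist (w k) a + dist a 0 := dist_triangle _ _ _
      _ ≤ 3 := by linarith
  obtain ⟨p, hpK, φ, hφ, hconv⟩ := hK.tendsto_subseq hwK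
  have h1 : Tendsto (fun k => infDist (w (φ k)) A) atTop (𝓝 (infDist p A)) :=
    ((Metric.continuous_infDist_pt A).tendsto p).comp hconv
  have h2 : Tendsto (fun k => 1/((φ k : ℝ)+1)) atTop (𝓝 0) :=
    tendsto_one_div_add_atTop_nhds_zero_nat.comp hφ.tendsto_atTop
  have hle : infDist p A ≤ 0 := le_of_tendsto_of_tendsto' h1 h2 (fun k => hw2 (φ k))
  have hp0 : infDist p A = 0 := le_antisymm hle Metric.infDist_nonneg
  have hpA : p ∈ A := (hAcl.mem_iff_infDist_zero ⟨0, h0A⟩).2 hp0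
  have hpcl : p ∈ closure Aᶜ := hpK.1
  have hpfr : p ∈ frontier Aᶜ := by
    rw [frontier_compl, hAcl.frontier_eq]
    refine ⟨hpA, ?_⟩
    rw [closure_compl] at hpcl
    exact hpcl
  have hup : u p ≤ mP Aᶜ u := le_csSup (frontier_bdd hAcl hAbd hu) (mem_image_of_mem u hpfr)
  have h3 : Tendsto (fun k => u (w (φ k))) atTop (𝓝 (u p)) := by
    have hwithin : Tendsto (fun k => w (φ k)) atTop (𝓝[closure Aᶜ] p) :=
      tendsto_nhdsWithin_of_tendsto_nhds_of_eventually_within _ hconv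
        (Eventually.of_forall fun k => hw1 (φ k))
    exact ((hu p hpcl).tendsto).comp hwithin
  have h4 : mP Aᶜ u + δ' ≤ u p :=
    ge_of_tendsto h3 (Eventually.of_forall fun k => (hw3 (φ k)).le)
  linarith

private lemma global_upper (hAcl : IsClosed A) (hAbd : IsBounded A) (h0A : (0 : Euc n) ∈ A)
    (hA1 : A ⊆ ball 0 1) {u : Euc n → ℝ} (hu : ContinuousOn u (closure Aᶜ))
    (hCA : CmpAbove Aᶜ u) {Sp : ℝ} (hSp : Tendsto (SP Aᶜ u) atTop (𝓝 Sp)) :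
    ∀ z, z ∉ A → u z ≤ mP Aᶜ u + Sp * ‖z‖ := by
  intro z hz
  refine le_of_forall_pos_le_add ?_
  intro ε hε
  set e2 := ε/(2*(‖z‖+1)) with he2
  have he2pos : 0 < e2 := by positivity
  obtain ⟨δ₀, hδ₀pos, hcol⟩ := collar hAcl hAbd h0A hA1 hu (δ' := ε/2) (by positivity)
  have hdz : 0 < infDist z A := by
    have hne : infDist z A ≠ 0 := fun h => hz ((hAcl.mem_iff_infDist_zero ⟨0, h0A⟩).2 h)
    exact Metric.infDist_nonneg.lt_of_ne' hne
  set δ := min δ₀ (infDist z A) / 2 with hδ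
  have hδpos : 0 < δ := by positivity
  have hδlt : δ < infDist z A := by
    have h1 : min δ₀ (infDist z A) ≤ infDist z A := min_le_right _ _
    rw [hδ]; linarith
  have hδle : δ ≤ δ₀ := by
    have h1 : min δ₀ (infDist z A) ≤ δ₀ := min_le_left _ _
    rw [hδ]; linarith
  have hev : ∀ᶠ R in atTop, (SP Aᶜ u R ≤ Sp + e2 ∧ ‖z‖ < R) ∧ 1 < R :=
    ((hSp.eventually (eventually_le_nhds (lt_add_of_pos_right Sp he2pos))).and
      (eventually_gt_atTop _)).and (eventually_gt_atTop 1)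
  obtain ⟨R, ⟨hSPR, hzR⟩, hR1⟩ := hev.exists
  have hR0 : (0:ℝ) < R := by linarith
  set V := ball (0:Euc n) R ∩ {w | δ < infDist w A} with hV
  have hVo : IsOpen V := isOpen_ball.inter (isOpen_lt continuous_const (Metric.continuous_infDist_pt A))
  have hVb : IsBounded V := Metric.isBounded_ball.subset inter_subset_left
  have hclsub : closure {w : Euc n | δ < infDist w A} ⊆ {w | δ ≤ infDist w A} :=
    closure_minimal (fun x hx => (le_of_lt (hx : δ < infDist x A) : δ ≤ infDist x A))
      (isClosed_le continuous_const (Metric.continuous_infDist_pt A))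
  have hVcl : closure V ⊆ Aᶜ := by
    intro w hw
    have h1 : w ∈ closure {w : Euc n | δ < infDist w A} :=
      closure_mono inter_subset_right hw
    have h2 : δ ≤ infDist w A := hclsub h1
    intro hwA
    rw [Metric.infDist_zero_of_mem hwA] at h2
    linarith
  have h0V : (0:Euc n) ∉ V := by
    intro h
    have h1 : δ < infDist (0:Euc n) A := h.2
    rw [Metric.infDist_zero_of_mem h0A] at h1
    linarith
  have hSPR0 : 0 ≤ SP Aᶜ u R := SP_nonneg u hR0
  have hbnd : ∀ x ∈ frontier (V \ {(0:Euc n)}),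
      u x ≤ SP Aᶜ u R * ‖x - 0‖ + (mP Aᶜ u + ε/2) := by
    intro x hx
    rw [Set.diff_singleton_eq_self h0V] at hx
    rcases frontier_inter_subset _ _ hx with ⟨hx1, -⟩ | ⟨-, hx2⟩
    · rw [frontier_ball 0 (ne_of_gt hR0)] at hx1
      have h7 : u x ≤ sSup (u '' sphere (0:Euc n) R) :=
        le_csSup (bddAbove_sphere hA1 hu hR1.le) (mem_image_of_mem u hx1)
      have h8 : sSup (u '' sphere (0:Euc n) R) ≤ mP Aᶜ u + SP Aᶜ u R * R := by
        rw [mp_SP u (ne_of_gt hR0)]; exact le_max_left _ _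
      have h9 : ‖x - 0‖ = R := by
        rw [sub_zero]; exact mem_sphere_zero_iff_norm.1 hx1
      rw [h9]; linarith
    · have hxd : infDist x A = δ :=
        (frontier_lt_subset_eq continuous_const (Metric.continuous_infDist_pt A) hx2).symm
      have hxnA : x ∉ A := by
        intro h
        rw [Metric.infDist_zero_of_mem h] at hxd
        linarith
      have h10 := hcol x (subset_closure hxnA) (by rw [hxd]; exact hδle)
      nlinarith [mul_nonneg hSPR0 (norm_nonneg (x - (0:Euc n)))]
  have hzV : z ∈ V := by
    refine ⟨?_, hδlt⟩
    rw [mem_ball, dist_zero_right]; exact hzR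
  have key := hCA V hVo hVb hVcl 0 (SP Aᶜ u R) (mP Aᶜ u + ε/2) hbnd z hzV
  rw [sub_zero] at key
  have h5 : SP Aᶜ u R * ‖z‖ ≤ (Sp + e2) * ‖z‖ :=
    mul_le_mul_of_nonneg_right hSPR (norm_nonneg z)
  have h6 : e2 * ‖z‖ ≤ ε/2 := by
    rw [he2, div_mul_eq_mul_div, div_le_iff₀ (by positivity)]
    nlinarith [norm_nonneg z]
  nlinarith [norm_nonneg z]

private lemma key_upper (hAcl : IsClosed A) (hAbd : IsBounded A) (h0A : (0 : Euc n) ∈ A)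
    (hA1 : A ⊆ ball 0 1) {u : Euc n → ℝ} (hu : ContinuousOn u (closure Aᶜ))
    (hIH : InfHarmonic Aᶜ u) {Sp Sm : ℝ} (hSp : Tendsto (SP Aᶜ u) atTop (𝓝 Sp))
    (hSm : Tendsto (SM Aᶜ u) atTop (𝓝 Sm)) (hle : Sm ≤ Sp) {ε : ℝ} (hε : 0 < ε) :
    ∃ r₀, 2 ≤ r₀ ∧ ∀ x y : Euc n, r₀ ≤ ‖x‖ → r₀ ≤ ‖y‖ →
      u x - u y ≤ (Sp + ε) * ‖x - y‖ := by
  have hupper := global_upper hAcl hAbd h0A hA1 hu hIH.1 hSp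
  have hSmneg : Tendsto (SP Aᶜ (fun x => -u x)) atTop (𝓝 Sm) :=
    hSm.congr (fun r => (SP_neg Aᶜ u r).symm)
  have hlowneg := global_upper hAcl hAbd h0A hA1 hu.neg (cmpAbove_neg hIH.2) hSmneg
  have hlower : ∀ z, z ∉ A → mM Aᶜ u - Sm * ‖z‖ ≤ u z := by
    intro z hz
    have h1 : -u z ≤ mP Aᶜ (fun x => -u x) + Sm * ‖z‖ := hlowneg z hz
    rw [mP_neg] at h1
    linarith
  have hSp0 : 0 ≤ Sp := Sp_nonneg u hSp
  set C := |mP Aᶜ u| + |mM Aᶜ u| + 2*Sp + ε + 1 with hC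
  have hC0 : 0 < C := by positivity
  refine ⟨max 2 (C/ε), le_max_left _ _, ?_⟩
  intro x y hx hy
  have hx2 : (2:ℝ) ≤ ‖x‖ := le_trans (le_max_left _ _) hx
  have hy2 : (2:ℝ) ≤ ‖y‖ := le_trans (le_max_left _ _) hy
  have hεr : C ≤ ε * ‖y‖ := by
    have h1 : C/ε ≤ ‖y‖ := le_trans (le_max_right _ _) hy
    rw [div_le_iff₀ hε] at h1
    linarith [h1]
  -- choose R
  have hev : ∀ᶠ R in atTop, (SP Aᶜ u R ≤ Sp + ε/2 ∧ (‖x‖ + 1 ≤ R ∧ ‖y‖ + 1 ≤ R)) ∧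
      ((2*Sp + ε) * ‖y‖ + |mP Aᶜ u| + |mM Aᶜ u| + 1) / (ε/2) ≤ R :=
    ((hSp.eventually (eventually_le_nhds (by linarith : Sp < Sp + ε/2))).and
      ((eventually_ge_atTop _).and (eventually_ge_atTop _))).and (eventually_ge_atTop _)
  obtain ⟨R, ⟨hSPR, hxR, hyR⟩, hRbig⟩ := hev.exists
  have hR2 : (2:ℝ) < R := by linarith
  have hR0 : (0:ℝ) < R := by linarith
  have hRc : (2*Sp + ε) * ‖y‖ + |mP Aᶜ u| + |mM Aᶜ u| + 1 ≤ (ε/2) * R := by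
    rw [div_le_iff₀ (by positivity)] at hRbig
    linarith
  set V := ball (0 : Euc n) R ∩ (closedBall (0:Euc n) 1)ᶜ with hV
  have hVo : IsOpen V := isOpen_ball.inter isClosed_closedBall.isOpen_compl
  have hVb : IsBounded V := Metric.isBounded_ball.subset inter_subset_left
  have hVcl : closure V ⊆ Aᶜ := by
    intro w hw
    have h1 : w ∈ closure ((closedBall (0:Euc n) 1)ᶜ) := closure_mono inter_subset_right hw
    have h2 : closure ((closedBall (0:Euc n) 1)ᶜ) ⊆ (ball (0:Euc n) 1)ᶜ :=
      closure_minimal (compl_subset_compl.2 ball_subset_closedBall) isOpen_ball.isClosed_compl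
    exact fun hwA => (h2 h1) (hA1 hwA)
  have hmemV : ∀ w : Euc n, 2 ≤ ‖w‖ → ‖w‖ + 1 ≤ R → w ∈ V := by
    intro w h1 h2
    constructor
    · rw [mem_ball, dist_zero_right]; linarith
    · rw [mem_compl_iff, mem_closedBall, dist_zero_right]; push_neg; linarith
  have hyV : y ∈ V := hmemV y hy2 hyR
  have hxV : x ∈ V := hmemV x hx2 hxR
  have hynA : y ∉ A := fun h => by
    have := hA1 h; rw [mem_ball, dist_zero_right] at this; linarith
  have huy : mM Aᶜ u - Sp * ‖y‖ ≤ u y := by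
    have h1 := hlower y hynA
    nlinarith [norm_nonneg y]
  have hbnd : ∀ z ∈ frontier (V \ {y}), u z ≤ (Sp + ε) * ‖z - y‖ + u y := by
    intro z hz
    rw [diff_eq] at hz
    have hz' : z ∈ frontier V ∪ {y} := by
      rcases frontier_inter_subset _ _ hz with ⟨h, -⟩ | ⟨-, h⟩
      · exact Or.inl h
      · right
        rw [frontier_compl] at h
        have h2 : frontier {y} ⊆ {y} := by
          intro w hw
          have h3 := frontier_subset_closure hw
          rwa [closure_singleton] at h3
        exact h2 h
    rcases hz' with hzf | hzy
    swap
    · rw [mem_singleton_iff] at hzy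
      subst hzy
      simp only [sub_self, norm_zero, mul_zero, zero_add, le_refl]
    rcases frontier_inter_subset _ _ hzf with ⟨h1, -⟩ | ⟨-, h2⟩
    · -- outer sphere
      rw [frontier_ball 0 (ne_of_gt hR0)] at h1
      have hznorm : ‖z‖ = R := mem_sphere_zero_iff_norm.1 h1
      have h7 : u z ≤ sSup (u '' sphere (0:Euc n) R) :=
        le_csSup (bddAbove_sphere hA1 hu (by linarith)) (mem_image_of_mem u h1)
      have h8 : sSup (u '' sphere (0:Euc n) R) ≤ mP Aᶜ u + SP Aᶜ u R * R := by
        rw [mp_SP u (ne_of_gt hR0)]; exact le_max_left _ _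
      have h9 : SP Aᶜ u R * R ≤ (Sp + ε/2) * R :=
        mul_le_mul_of_nonneg_right hSPR hR0.le
      have h10 : R - ‖y‖ ≤ ‖z - y‖ := by
        have := norm_sub_norm_le z y
        linarith [hznorm ▸ this]
      have h11 : (Sp + ε) * (R - ‖y‖) ≤ (Sp + ε) * ‖z - y‖ :=
        mul_le_mul_of_nonneg_left h10 (by linarith)
      have h12 : mP Aᶜ u ≤ |mP Aᶜ u| := le_abs_self _
      have h13 : -|mM Aᶜ u| ≤ mM Aᶜ u := neg_abs_le _
      nlinarith [norm_nonneg y]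
    · -- inner sphere
      rw [frontier_compl, frontier_closedBall 0 one_ne_zero] at h2
      have hznorm : ‖z‖ = 1 := mem_sphere_zero_iff_norm.1 h2
      have hznA : z ∉ A := fun h => by
        have := hA1 h; rw [mem_ball, dist_zero_right] at this; linarith
      have h7 : u z ≤ mP Aᶜ u + Sp * 1 := by
        have := hupper z hznA; rwa [hznorm] at this
      have h10 : ‖y‖ - 1 ≤ ‖z - y‖ := by
        have h := norm_sub_norm_le y z
        rw [← norm_neg (y - z), neg_sub] at h
        linarith [hznorm ▸ h]
      have h11 : (Sp + ε) * (‖y‖ - 1) ≤ (Sp + ε) * ‖z - y‖ :=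
        mul_le_mul_of_nonneg_left h10 (by linarith)
      have h12 : mP Aᶜ u ≤ |mP Aᶜ u| := le_abs_self _
      have h13 : -|mM Aᶜ u| ≤ mM Aᶜ u := neg_abs_le _
      nlinarith [norm_nonneg y]
  have key := hIH.1 V hVo hVb hVcl y (Sp + ε) (u y) hbnd x hxV
  linarith

private lemma lower_pairs (hA1 : A ⊆ ball 0 1) {u : Euc n → ℝ}
    (hu : ContinuousOn u (closure Aᶜ)) (hnt : Nontrivial (Euc n)) {Sp : ℝ}
    (hSp : Tendsto (SP Aᶜ u) atTop (𝓝 Sp)) {ε : ℝ} (hε : 0 < ε) {r : ℝ} (hr : 2 ≤ r) :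
    ∃ x y : Euc n, r ≤ ‖x‖ ∧ r ≤ ‖y‖ ∧ x ≠ y ∧ Sp - ε ≤ |u x - u y| / ‖x - y‖ := by
  haveI := hnt
  have hsph : ∀ ρ : ℝ, 0 ≤ ρ → ∃ p : Euc n, ‖p‖ = ρ := by
    intro ρ hρ
    obtain ⟨p, hp⟩ := (NormedSpace.sphere_nonempty (E := Euc n) (x := 0) (r := ρ)).2 hρ
    exact ⟨p, mem_sphere_zero_iff_norm.1 hp⟩
  rcases le_or_gt Sp ε with hSpε | hSpε
  · obtain ⟨p, hp⟩ := hsph (r+1) (by linarith)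
    obtain ⟨q, hq⟩ := hsph (r+2) (by linarith)
    have hne : p ≠ q := fun h => by rw [h, hq] at hp; linarith
    refine ⟨p, q, by linarith [hp.ge, hp.le], by linarith [hq.ge, hq.le], hne, ?_⟩
    have h0 : (0:ℝ) ≤ |u p - u q| / ‖p - q‖ := div_nonneg (abs_nonneg _) (norm_nonneg _)
    linarith
  · set η := ε/2 with hη
    have hηpos : 0 < η := by positivity
    obtain ⟨y₀, hy₀⟩ := hsph r (by linarith)
    have hev : ∀ᶠ R in atTop, (Sp - η ≤ SP Aᶜ u R ∧ r + 1 ≤ R) ∧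
        ((Sp - ε) * r + 1 + u y₀ - mP Aᶜ u) / (ε/2) ≤ R :=
      ((hSp.eventually (eventually_ge_nhds (by linarith : Sp - η < Sp))).and
        (eventually_ge_atTop _)).and (eventually_ge_atTop _)
    obtain ⟨R, ⟨hSPR, hRr⟩, hRbig⟩ := hev.exists
    have hR0 : (0:ℝ) < R := by linarith
    have hRc : (Sp - ε) * r + 1 + u y₀ - mP Aᶜ u ≤ (ε/2) * R := by
      rw [div_le_iff₀ (by positivity)] at hRbig
      linarith
    have hSPRpos : 0 < SP Aᶜ u R := by linarith
    have hmax : max (sSup (u '' sphere (0:Euc n) R)) (mP Aᶜ u) = sSup (u '' sphere (0:Euc n) R) := by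
      rcases max_cases (sSup (u '' sphere (0:Euc n) R)) (mP Aᶜ u) with ⟨h1, h2⟩ | ⟨h1, h2⟩
      · exact h1
      · exfalso
        have h3 : SP Aᶜ u R ≤ 0 := by
          rw [SP, h1]
          simp only [sub_self, zero_div, le_refl]
        linarith
    have hsSup : mP Aᶜ u + (Sp - η) * R ≤ sSup (u '' sphere (0:Euc n) R) := by
      have h1 := mp_SP (A := A) u (ne_of_gt hR0)
      rw [hmax] at h1
      nlinarith [mul_le_mul_of_nonneg_right hSPR hR0.le]
    have hnem : (u '' sphere (0:Euc n) R).Nonempty := by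
      obtain ⟨p, hp⟩ := hsph R hR0.le
      exact ⟨u p, mem_image_of_mem u (mem_sphere_zero_iff_norm.2 hp)⟩
    obtain ⟨v, hvmem, hvgt⟩ := exists_lt_of_lt_csSup hnem
      (sub_one_lt (sSup (u '' sphere (0:Euc n) R)))
    obtain ⟨x, hxsph, hxv⟩ := hvmem
    have hxnorm : ‖x‖ = R := mem_sphere_zero_iff_norm.1 hxsph
    have hux : mP Aᶜ u + (Sp - η) * R - 1 ≤ u x := by rw [hxv]; linarith
    have hne : x ≠ y₀ := fun h => by rw [h, hy₀] at hxnorm; linarith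
    have hnormle : ‖x - y₀‖ ≤ R + r := by
      calc ‖x - y₀‖ ≤ ‖x‖ + ‖y₀‖ := norm_sub_le _ _
        _ = R + r := by rw [hxnorm, hy₀]
    have hdiff : (Sp - ε) * ‖x - y₀‖ ≤ u x - u y₀ := by
      have h1 : (Sp - ε) * ‖x - y₀‖ ≤ (Sp - ε) * (R + r) :=
        mul_le_mul_of_nonneg_left hnormle (by linarith)
      nlinarith
    have hpos : 0 < ‖x - y₀‖ := by
      rw [norm_pos_iff]
      exact sub_ne_zero.2 hne
    refine ⟨x, y₀, by linarith [hxnorm.ge], hy₀.ge, hne, ?_⟩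
    rw [le_div_iff₀ hpos]
    calc (Sp - ε) * ‖x - y₀‖ ≤ u x - u y₀ := hdiff
      _ ≤ |u x - u y₀| := le_abs_self _

private lemma mainPlus (hAcl : IsClosed A) (hAbd : IsBounded A) (h0A : (0:Euc n) ∈ A)
    (hA1 : A ⊆ ball 0 1) {u : Euc n → ℝ} (hu : ContinuousOn u (closure Aᶜ))
    (hIH : InfHarmonic Aᶜ u) (hnt : Nontrivial (Euc n)) {Sp Sm : ℝ}
    (hSp : Tendsto (SP Aᶜ u) atTop (𝓝 Sp)) (hSm : Tendsto (SM Aᶜ u) atTop (𝓝 Sm))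
    (hle : Sm ≤ Sp) :
    Tendsto (fun r => lipOn u (ball (0:Euc n) r)ᶜ) atTop (𝓝 Sp) := by
  have hSp0 : 0 ≤ Sp := Sp_nonneg u hSp
  rw [Metric.tendsto_atTop]
  intro ε hε
  obtain ⟨r₀, hr₀2, hkey⟩ :=
    key_upper hAcl hAbd h0A hA1 hu hIH hSp hSm hle (ε := ε/2) (by positivity)
  refine ⟨r₀, fun r hr => ?_⟩
  set Q := (fun p : Euc n × Euc n => |u p.1 - u p.2| / ‖p.1 - p.2‖) ''
    {p : Euc n × Euc n | p.1 ∈ (ball (0:Euc n) r)ᶜ ∧ p.2 ∈ (ball (0:Euc n) r)ᶜ ∧ p.1 ≠ p.2}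
    with hQ
  have hlip : lipOn u (ball (0:Euc n) r)ᶜ = sSup Q := rfl
  have hnorm : ∀ w : Euc n, w ∈ (ball (0:Euc n) r)ᶜ → r₀ ≤ ‖w‖ := by
    intro w hw
    rw [mem_compl_iff, mem_ball, dist_zero_right, not_lt] at hw
    linarith
  have hub : ∀ q ∈ Q, q ≤ Sp + ε/2 := by
    rintro q ⟨p, ⟨hp1, hp2, hpne⟩, rfl⟩
    have h1 := hkey p.1 p.2 (hnorm _ hp1) (hnorm _ hp2)
    have h2 := hkey p.2 p.1 (hnorm _ hp2) (hnorm _ hp1)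
    rw [show ‖p.2 - p.1‖ = ‖p.1 - p.2‖ from by rw [← norm_neg (p.2 - p.1), neg_sub]] at h2
    have habs : |u p.1 - u p.2| ≤ (Sp + ε/2) * ‖p.1 - p.2‖ := abs_sub_le_iff.2 ⟨h1, h2⟩
    have hpos : 0 < ‖p.1 - p.2‖ := by rw [norm_pos_iff]; exact sub_ne_zero.2 hpne
    rw [div_le_iff₀ hpos]
    linarith
  have hBdd : BddAbove Q := ⟨Sp + ε/2, fun q hq => hub q hq⟩
  have hupper : sSup Q ≤ Sp + ε/2 := Real.sSup_le hub (by linarith)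
  obtain ⟨x, y, hxr, hyr, hxy, hq⟩ :=
    lower_pairs hA1 hu hnt hSp (ε := ε/2) (by positivity) (r := r) (le_trans hr₀2 hr)
  have hmem : |u x - u y| / ‖x - y‖ ∈ Q := by
    refine ⟨(x, y), ⟨?_, ?_, hxy⟩, rfl⟩
    · rw [mem_compl_iff, mem_ball, dist_zero_right]; exact not_lt.2 hxr
    · rw [mem_compl_iff, mem_ball, dist_zero_right]; exact not_lt.2 hyr
  have hlower : Sp - ε/2 ≤ sSup Q := le_trans hq (le_csSup hBdd hmem)
  rw [hlip, Real.dist_eq, abs_lt]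
  constructor <;> linarith

end Main

/-- Proposition 1: lim_{r→∞} Lip(u, B_r^c) = S_∞. -/
theorem stmt2 {n : ℕ} (A : Set (Euc n)) (hAcl : IsClosed A) (hAbd : IsBounded A)
    (h0A : (0 : Euc n) ∈ A) (hA1 : A ⊆ ball 0 1)
    (u : Euc n → ℝ) (hu : ContinuousOn u (closure Aᶜ)) (hIH : InfHarmonic Aᶜ u)
    (hgrow : IsBoundedUnder (· ≤ ·) (cobounded (Euc n)) fun x => |u x| / ‖x‖)
    (Sp Sm : ℝ) (hSp : Tendsto (SP Aᶜ u) atTop (𝓝 Sp))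
    (hSm : Tendsto (SM Aᶜ u) atTop (𝓝 Sm)) :
    Tendsto (fun r => lipOn u (ball (0 : Euc n) r)ᶜ) atTop (𝓝 (max Sp Sm)) := by
  rcases Nat.eq_zero_or_pos n with hn | hn
  · -- degenerate dimension-zero case
    subst hn
    haveI hss : Subsingleton (Euc 0) := ⟨fun a b => by
      apply PiLp.ext
      intro i
      exact i.elim0⟩
    have hAuniv : A = univ := eq_univ_of_forall (fun x => (Subsingleton.elim x 0) ▸ h0A)
    have hfr : frontier Aᶜ = (∅ : Set (Euc 0)) := by
      rw [hAuniv, compl_univ, frontier_empty]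
    have hmP : mP Aᶜ u = 0 := by rw [mP, hfr, image_empty, Real.sSup_empty]
    have hmM : mM Aᶜ u = 0 := by rw [mM, hfr, image_empty, Real.sInf_empty]
    have hsphere : ∀ r : ℝ, 0 < r → sphere (0 : Euc 0) r = ∅ := by
      intro r hr
      rw [eq_empty_iff_forall_notMem]
      intro x hx
      rw [mem_sphere_zero_iff_norm, Subsingleton.elim x 0, norm_zero] at hx
      linarith
    have hSP0 : ∀ r : ℝ, 0 < r → SP Aᶜ u r = 0 := by
      intro r hr
      rw [SP, hsphere r hr, image_empty, Real.sSup_empty, hmP]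
      simp
    have hSM0 : ∀ r : ℝ, 0 < r → SM Aᶜ u r = 0 := by
      intro r hr
      rw [SM, hsphere r hr, image_empty, Real.sInf_empty, hmM]
      simp
    have hSp0 : Sp = 0 := by
      refine tendsto_nhds_unique hSp ?_
      refine tendsto_const_nhds.congr' ?_
      filter_upwards [eventually_gt_atTop 0] with r hr
      exact (hSP0 r hr).symm
    have hSm0 : Sm = 0 := by
      refine tendsto_nhds_unique hSm ?_
      refine tendsto_const_nhds.congr' ?_
      filter_upwards [eventually_gt_atTop 0] with r hr
      exact (hSM0 r hr).symm
    have hlip0 : ∀ S : Set (Euc 0), lipOn u S = 0 := by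
      intro S
      have hset : {p : Euc 0 × Euc 0 | p.1 ∈ S ∧ p.2 ∈ S ∧ p.1 ≠ p.2} = ∅ := by
        rw [eq_empty_iff_forall_notMem]
        intro p hp
        exact hp.2.2 (Subsingleton.elim _ _)
      rw [lipOn, hset, image_empty, Real.sSup_empty]
    rw [hSp0, hSm0, max_self]
    have : (fun r => lipOn u (ball (0 : Euc 0) r)ᶜ) = fun _ => (0:ℝ) := by
      funext r
      exact hlip0 _
    rw [this]
    exact tendsto_const_nhds
  · haveI hnt : Nontrivial (Euc n) := by
      apply Module.nontrivial_of_finrank_pos (R := ℝ)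
      rw [finrank_euclideanSpace_fin]
      exact hn
    rcases le_total Sm Sp with hle | hle
    · rw [max_eq_left hle]
      exact mainPlus hAcl hAbd h0A hA1 hu hIH hnt hSp hSm hle
    · rw [max_eq_right hle]
      have hSp' : Tendsto (SP Aᶜ (fun x => -u x)) atTop (𝓝 Sm) :=
        hSm.congr (fun r => (SP_neg Aᶜ u r).symm)
      have hSm' : Tendsto (SM Aᶜ (fun x => -u x)) atTop (𝓝 Sp) :=
        hSp.congr (fun r => (SM_neg Aᶜ u r).symm)
      have h := mainPlus hAcl hAbd h0A hA1 hu.neg (infHarmonic_neg hIH) hnt hSp' hSm' hle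
      exact h.congr (fun r => lipOn_neg u _)
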